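/- For f analytic normalized on 𝔻 belonging to K_s((1+(1-2γ)z)/(1-z)) with 0 ≤ γ < 1, the distortion bounds (1-(1-2γ)r)/((1+r)(1+r²)) ≤ |f'(z)| ≤ (1+(1-2γ)r)/((1-r)(1-r²)) hold for |z| = r < 1. -/

import Mathlib

open Complex Metric

open Set in
lemma mobius_bounds (c r : ℝ) (u : ℂ) (hc1 : -1 ≤ c) (hc2 : c ≤ 1)
    (hr0 : 0 ≤ r) (hr1 : r < 1) (hu : ‖u‖ ≤ r) :
    (1 - c*r)/(1+r) ≤ ‖(1 + (c:ℂ)*u)/(1-u)‖ ∧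
    ‖(1 + (c:ℂ)*u)/(1-u)‖ ≤ (1 + c*r)/(1-r) := by
  have hu1 : ‖u‖ < 1 := lt_of_le_of_lt hu hr1
  have h1u : (1:ℂ) - u ≠ 0 := by
    intro h
    have : u = 1 := by linear_combination -h
    rw [this] at hu1; simp at hu1
  have hr2 : (0:ℝ) < 1 - r^2 := by nlinarith
  have hns : Complex.normSq u ≤ r^2 := by
    rw [← Complex.sq_norm]; nlinarith [norm_nonneg u]
  have key : ‖u - (r^2 : ℝ)‖ ≤ r * ‖1 - u‖ := by
    rw [← pow_le_pow_iff_left₀ (norm_nonneg _)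
      (mul_nonneg hr0 (norm_nonneg _)) (two_ne_zero)]
    rw [mul_pow, Complex.sq_norm, Complex.sq_norm]
    simp only [Complex.normSq_apply, Complex.sub_re, Complex.sub_im, Complex.ofReal_re,
      Complex.ofReal_im, Complex.one_re, Complex.one_im]
    have h3 : u.re^2 + u.im^2 ≤ r^2 := by
      simp only [Complex.normSq_apply] at hns; nlinarith
    nlinarith
  have h2 : ((1:ℂ) - (r:ℂ)^2) ≠ 0 := by
    rw [show ((1:ℂ) - (r:ℂ)^2) = ((1 - r^2 : ℝ) : ℂ) by push_cast; ring]
    exact_mod_cast (by linarith : (1 - r^2 : ℝ) ≠ 0)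
  have hid : (1 + (c:ℂ)*u)/(1-u) - ((1:ℂ) + c*r^2)/((1:ℂ)-r^2)
      = ((1+c) * (u - (r^2:ℝ)))/((1-u)*((1:ℂ)-r^2)) := by
    field_simp
    push_cast; ring
  have h4 : (0:ℝ) < ‖1 - u‖ := by
    simpa [norm_pos_iff] using h1u
  have habsdiff : ‖(1 + (c:ℂ)*u)/(1-u) - ((1:ℂ) + c*r^2)/((1:ℂ)-r^2)‖
      ≤ (1+c)*r/(1-r^2) := by
    rw [hid, norm_div, norm_mul, norm_mul]
    have e1 : ‖(1:ℂ)+c‖ = 1 + c := by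
      rw [show ((1:ℂ)+c) = ((1+c : ℝ) : ℂ) by push_cast; ring, Complex.norm_real, Real.norm_eq_abs]
      exact _root_.abs_of_nonneg (by linarith)
    have e2 : ‖(1:ℂ) - r^2‖ = 1 - r^2 := by
      rw [show ((1:ℂ) - (r:ℂ)^2) = ((1 - r^2 : ℝ) : ℂ) by push_cast; ring, Complex.norm_real, Real.norm_eq_abs]
      exact _root_.abs_of_nonneg (by linarith)
    rw [e1, e2]
    rw [div_le_div_iff₀ (mul_pos h4 hr2) hr2]
    nlinarith [mul_le_mul_of_nonneg_left key
      (mul_nonneg (by linarith : (0:ℝ) ≤ 1+c) hr2.le)]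
  have hcenter : ‖((1:ℂ) + c*r^2)/((1:ℂ)-r^2)‖ = (1 + c*r^2)/(1-r^2) := by
    rw [show ((1:ℂ)+c*r^2) = ((1+c*r^2 : ℝ) : ℂ) by push_cast; ring,
      show ((1:ℂ)-(r:ℂ)^2) = ((1-r^2 : ℝ) : ℂ) by push_cast; ring, norm_div,
      Complex.norm_real, Real.norm_eq_abs, Complex.norm_real, Real.norm_eq_abs,
      _root_.abs_of_nonneg (show (0:ℝ) ≤ 1+c*r^2 by nlinarith),
      _root_.abs_of_nonneg (show (0:ℝ) ≤ 1-r^2 by linarith)]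
  constructor
  · have tri : ‖((1:ℂ) + c*r^2)/((1:ℂ)-r^2)‖ - ‖(1 + (c:ℂ)*u)/(1-u)‖
        ≤ ‖((1:ℂ) + c*r^2)/((1:ℂ)-r^2) - (1 + (c:ℂ)*u)/(1-u)‖ := by
      have t := norm_sub_norm_le (((1:ℂ) + c*r^2)/((1:ℂ)-r^2)) ((1 + (c:ℂ)*u)/(1-u))
      exact t
    rw [hcenter] at tri
    have h5 : ‖((1:ℂ) + c*r^2)/((1:ℂ)-r^2) - (1 + (c:ℂ)*u)/(1-u)‖ ≤ (1+c)*r/(1-r^2) := by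
      rw [← norm_neg]; simpa [neg_sub] using habsdiff
    have h6 : (1 + c*r^2)/(1-r^2) - (1+c)*r/(1-r^2) = (1 - c*r)/(1+r) := by
      rw [← sub_div, div_eq_div_iff (by linarith) (by linarith)]
      ring
    linarith
  · have tri : ‖(1 + (c:ℂ)*u)/(1-u)‖ - ‖((1:ℂ) + c*r^2)/((1:ℂ)-r^2)‖
        ≤ ‖(1 + (c:ℂ)*u)/(1-u) - ((1:ℂ) + c*r^2)/((1:ℂ)-r^2)‖ := by
      have t := norm_sub_norm_le ((1 + (c:ℂ)*u)/(1-u)) (((1:ℂ) + c*r^2)/((1:ℂ)-r^2))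
      exact t
    rw [hcenter] at tri
    have h6 : (1 + c*r^2)/(1-r^2) + (1+c)*r/(1-r^2) = (1 + c*r)/(1-r) := by
      rw [← add_div, div_eq_div_iff (by linarith) (by linarith)]
      ring
    linarith

open Set in
lemma schwarz_even (F : ℂ → ℂ) (hd : DifferentiableOn ℂ F (ball (0:ℂ) 1)) (h0 : F 0 = 0)
    (hlt : ∀ ζ ∈ ball (0:ℂ) 1, ‖F ζ‖ < 1)
    (heven : ∀ ζ, F (-ζ) = F ζ) :
    ∀ ζ ∈ ball (0:ℂ) 1, ‖F ζ‖ ≤ ‖ζ‖ ^ 2 := by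
  have hmaps : MapsTo F (ball (0:ℂ) 1) (ball (0:ℂ) 1) := by
    intro x hx; rw [mem_ball_zero_iff]; exact hlt x hx
  have step1 : ∀ ζ ∈ ball (0:ℂ) 1, ‖F ζ‖ ≤ ‖ζ‖ := by
    intro ζ hζ
    exact Complex.norm_le_norm_of_mapsTo_ball hd (hmaps.mono_right ball_subset_closedBall) h0 (mem_ball_zero_iff.1 hζ)
  set ψ := dslope F 0 with hψdef
  have hψd : DifferentiableOn ℂ ψ (ball (0:ℂ) 1) :=
    (differentiableOn_dslope (ball_mem_nhds _ one_pos)).2 hd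
  have hF0 : deriv F 0 = 0 := by
    have hFneg : (fun x => F (-x)) = F := funext heven
    have h := deriv_comp_neg (f := F) (x := (0:ℂ))
    rw [hFneg, neg_zero] at h
    linear_combination h / 2
  have hψ0 : ψ 0 = 0 := by rw [hψdef, dslope_same, hF0]
  have hψeq : ∀ ζ : ℂ, ζ ≠ 0 → ψ ζ = F ζ / ζ := by
    intro ζ hζ
    rw [hψdef, dslope_of_ne _ hζ, slope_def_field, h0]
    simp [div_eq_div_iff]
  have hψle : ∀ ζ ∈ ball (0:ℂ) 1, ‖ψ ζ‖ ≤ 1 := by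
    intro ζ hζ
    rcases eq_or_ne ζ 0 with rfl | hne
    · rw [hψ0]; simp
    · rw [hψeq ζ hne, norm_div]
      have h1 : 0 < ‖ζ‖ := norm_pos_iff.mpr hne
      rw [div_le_one h1]
      exact step1 ζ hζ
  have hψle' : ∀ ζ ∈ ball (0:ℂ) 1, ‖ψ ζ‖ ≤ ‖ζ‖ := by
    intro ζ hζ
    have hkey : ∀ ε : ℝ, 0 < ε → ‖ψ ζ‖ ≤ (1+ε) * ‖ζ‖ := by
      intro ε hε
      have hm : MapsTo ψ (ball (0:ℂ) 1) (ball (ψ 0) (1+ε)) := by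
        intro x hx
        rw [hψ0, mem_ball_zero_iff]
        exact lt_of_le_of_lt (hψle x hx) (by linarith)
      have := Complex.dist_le_div_mul_dist_of_mapsTo_ball hψd (hm.mono_right ball_subset_closedBall) hζ
      rw [hψ0, dist_zero_right, dist_zero_right, div_one] at this
      simpa using this
    rcases eq_or_ne ζ 0 with rfl | hne0
    · simp [hψ0]
    · by_contra hcon
      push_neg at hcon
      have hζpos : 0 < ‖ζ‖ := norm_pos_iff.mpr hne0
      have hε : 0 < (‖ψ ζ‖ - ‖ζ‖) / (2 * ‖ζ‖) := by
        apply div_pos (by linarith) (by linarith)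
      have h1 := hkey _ hε
      have e : (1 + (‖ψ ζ‖ - ‖ζ‖) / (2 * ‖ζ‖)) * ‖ζ‖
          = ‖ζ‖ + (‖ψ ζ‖ - ‖ζ‖) / 2 := by
        field_simp
      rw [e] at h1
      linarith
  intro ζ hζ
  rcases eq_or_ne ζ 0 with rfl | hne
  · simp [h0]
  · have := hψle' ζ hζ
    rw [hψeq ζ hne, norm_div] at this
    have h1 : 0 < ‖ζ‖ := norm_pos_iff.mpr hne
    rw [div_le_iff₀ h1] at this
    calc ‖F ζ‖ ≤ ‖ζ‖ * ‖ζ‖ := this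
    _ = ‖ζ‖ ^ 2 := by ring

open Set in
lemma carath_bound (k : ℂ → ℂ)
    (hka : AnalyticOnNhd ℂ k (ball (0:ℂ) 1)) (hk0 : k 0 = 1)
    (hkne : ∀ ζ ∈ ball (0:ℂ) 1, k ζ ≠ 0)
    (hkeven : ∀ ζ, k (-ζ) = k ζ)
    (hre : ∀ ζ ∈ ball (0:ℂ) 1, 0 < ((ζ * deriv k ζ + k ζ) / k ζ).re) :
    ∀ ζ ∈ ball (0:ℂ) 1,
      -(2 * ‖ζ‖^2/(1 + ‖ζ‖^2)) ≤ (ζ * deriv k ζ / k ζ).re ∧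
      (ζ * deriv k ζ / k ζ).re ≤ 2 * ‖ζ‖^2/(1 - ‖ζ‖^2) := by
  set ω : ℂ → ℂ := fun ζ => ζ * deriv k ζ / (ζ * deriv k ζ + 2 * k ζ) with hωdef
  have hden : ∀ ζ ∈ ball (0:ℂ) 1, ζ * deriv k ζ + 2 * k ζ ≠ 0 := by
    intro ζ hζ h
    have h2 := hre ζ hζ
    have e1 : ζ * deriv k ζ = -(2 * k ζ) := by linear_combination h
    rw [e1] at h2
    have e2 : (-(2 * k ζ) + k ζ) / k ζ = -1 := by
      rw [show (-(2 * k ζ) + k ζ) = -(k ζ) from by ring, neg_div, div_self (hkne ζ hζ)]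
    rw [e2] at h2
    norm_num at h2
  have hωlt : ∀ ζ ∈ ball (0:ℂ) 1, ‖ω ζ‖ < 1 := by
    intro ζ hζ
    set a := ζ * deriv k ζ
    set b := k ζ
    have hb : b ≠ 0 := hkne ζ hζ
    have hnb : 0 < Complex.normSq b := Complex.normSq_pos.2 hb
    have h3 := hre ζ hζ
    rw [Complex.div_re, ← add_div] at h3
    have hS : 0 < (a+b).re * b.re + (a+b).im * b.im := by
      rcases div_pos_iff.1 h3 with ⟨h, _⟩ | ⟨_, h⟩
      · exact h
      · linarith
    have hsq : Complex.normSq a < Complex.normSq (a + 2*b) := by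
      rw [show a + 2*b = a + b + b from by ring]
      simp only [Complex.normSq_apply, Complex.add_re, Complex.add_im]
      simp only [Complex.add_re, Complex.add_im] at hS
      nlinarith [hS]
    have habs : ‖a‖ < ‖a + 2*b‖ := by
      have := hsq
      rw [← Complex.sq_norm, ← Complex.sq_norm] at this
      exact lt_of_pow_lt_pow_left₀ 2 (norm_nonneg _) this
    have : ‖ω ζ‖ = ‖a‖ / ‖a + 2*b‖ := by
      rw [hωdef]; simp only [norm_div]; rfl
    rw [this, div_lt_one (lt_of_le_of_lt (norm_nonneg _) habs)]
    exact habs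
  have hkodd : ∀ ζ : ℂ, deriv k (-ζ) = -deriv k ζ := by
    intro ζ
    have h := deriv_comp_neg (f := k) (x := ζ)
    rw [funext hkeven] at h
    linear_combination h
  have hωd : DifferentiableOn ℂ ω (ball (0:ℂ) 1) := by
    apply DifferentiableOn.div
    · exact differentiableOn_id.mul (hka.deriv.differentiableOn)
    · exact (differentiableOn_id.mul (hka.deriv.differentiableOn)).add
        ((differentiableOn_const 2).mul hka.differentiableOn)
    · exact hden
  have hω0 : ω 0 = 0 := by simp [hωdef]
  have hωeven : ∀ ζ, ω (-ζ) = ω ζ := by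
    intro ζ
    rw [hωdef]
    simp only [hkodd, hkeven]
    rw [show -ζ * -deriv k ζ = ζ * deriv k ζ by ring]
  have hω2 := schwarz_even ω hωd hω0 hωlt hωeven
  intro ζ hζ
  have hρ : ‖ζ‖ < 1 := mem_ball_zero_iff.1 hζ
  set ρ := ‖ζ‖ with hρdef
  have hρ0 : 0 ≤ ρ := norm_nonneg ζ
  have hρ2 : ρ^2 < 1 := by nlinarith
  set a := ζ * deriv k ζ with hadef
  set b := k ζ with hbdef
  have hb : b ≠ 0 := hkne ζ hζ
  have hab : a + 2*b ≠ 0 := hden ζ hζ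
  set u := ω ζ with hudef
  have hu2 : ‖u‖ ≤ ρ^2 := hω2 ζ hζ
  have hult : ‖u‖ < 1 := hωlt ζ hζ
  have h1u : (1:ℂ) - u ≠ 0 := by
    intro h
    have : u = 1 := by linear_combination -h
    rw [this] at hult; simp at hult
  have hueq : u = a / (a + 2*b) := rfl
  have hpid : (1 + u)/(1 - u) = (a + b)/b := by
    rw [div_eq_div_iff h1u hb, hueq]
    field_simp
    ring
  have hsplit : (a + b)/b = a/b + 1 := by field_simp
  have hre_split : ((a+b)/b).re = (a/b).re + 1 := by rw [hsplit, Complex.add_re, Complex.one_re]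
  constructor
  · -- lower bound
    have hlow : (1-ρ^2)/(1+ρ^2) ≤ ((1+u)/(1-u)).re := by
      rw [Complex.div_re]
      have hnum : (1+u).re * (1-u).re + (1+u).im * (1-u).im = 1 - Complex.normSq u := by
        simp only [Complex.add_re, Complex.add_im, Complex.sub_re, Complex.sub_im,
          Complex.one_re, Complex.one_im, Complex.normSq_apply]
        ring
      rw [← add_div, hnum]
      have hpos : 0 < Complex.normSq (1-u) := Complex.normSq_pos.2 h1u
      rw [div_le_div_iff₀ (by nlinarith) hpos]
      have hs : Complex.normSq u = ‖u‖ ^ 2 := (Complex.sq_norm u).symm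
      have htri : ‖1 - u‖ ≤ 1 + ‖u‖ := by
        calc ‖1 - u‖ ≤ ‖(1:ℂ)‖ + ‖u‖ := by
              simpa using norm_sub_le (1:ℂ) u
        _ = 1 + ‖u‖ := by simp
      have hnsq : Complex.normSq (1-u) ≤ (1 + ‖u‖)^2 := by
        rw [← Complex.sq_norm]
        exact pow_le_pow_left₀ (norm_nonneg _) htri 2
      set s := ‖u‖
      have hs0 : 0 ≤ s := norm_nonneg u
      rw [hs]
      nlinarith [mul_nonneg (mul_nonneg (sub_nonneg.2 hu2) hs0) hs0,
        mul_nonneg (sub_nonneg.2 hu2) hs0, sub_nonneg.2 hu2]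
    rw [hpid, hre_split] at hlow
    have hρne' : (1:ℝ) + ρ^2 ≠ 0 := by nlinarith
    have heq : (1-ρ^2)/(1+ρ^2) - 1 = -(2*ρ^2/(1+ρ^2)) := by
      field_simp
      ring
    have hre2 : (ζ * deriv k ζ / k ζ).re = (a/b).re := by rw [← hadef, ← hbdef]
    rw [hre2]; linarith
  · -- upper bound
    have hup : ‖(1 + u)/(1-u)‖ ≤ (1 + 1*ρ^2)/(1 - ρ^2) := by
      have := (mobius_bounds 1 (ρ^2) u (by norm_num) (le_refl 1) (by positivity) hρ2 hu2).2
      simpa using this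
    rw [hpid] at hup
    have hre_le : ((a+b)/b).re ≤ ‖(a+b)/b‖ := Complex.re_le_norm _
    rw [hre_split] at hre_le
    have hρne : (1:ℝ) - ρ^2 ≠ 0 := by nlinarith
    have heq : (1 + 1*ρ^2)/(1-ρ^2) - 1 = 2*ρ^2/(1-ρ^2) := by
      field_simp
      ring
    have hre2 : (ζ * deriv k ζ / k ζ).re = (a/b).re := by rw [← hadef, ← hbdef]
    rw [hre2]; linarith

open Set in
lemma growth_from_bound (k : ℂ → ℂ)
    (hkd : DifferentiableOn ℂ k (ball (0:ℂ) 1)) (hk0 : k 0 = 1)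
    (hkne : ∀ ζ ∈ ball (0:ℂ) 1, k ζ ≠ 0)
    (hb : ∀ ζ ∈ ball (0:ℂ) 1,
      -(2 * ‖ζ‖^2/(1 + ‖ζ‖^2)) ≤ (ζ * deriv k ζ / k ζ).re ∧
      (ζ * deriv k ζ / k ζ).re ≤ 2 * ‖ζ‖^2/(1 - ‖ζ‖^2)) :
    ∀ z ∈ ball (0:ℂ) 1,
      1/(1 + ‖z‖^2) ≤ ‖k z‖ ∧
      ‖k z‖ ≤ 1/(1 - ‖z‖^2) := by
  intro z hz
  have hr : ‖z‖ < 1 := mem_ball_zero_iff.1 hz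
  set r := ‖z‖ with hrdef
  have hr0 : 0 ≤ r := norm_nonneg z
  have hmem : ∀ t ∈ Icc (0:ℝ) 1, (t:ℂ)*z ∈ ball (0:ℂ) 1 := by
    intro t ht
    rw [mem_ball_zero_iff, norm_mul, Complex.norm_real, Real.norm_eq_abs,
      _root_.abs_of_nonneg ht.1]
    nlinarith [ht.2]
  have hKne : ∀ t ∈ Icc (0:ℝ) 1, k ((t:ℂ)*z) ≠ 0 := fun t ht => hkne _ (hmem t ht)
  have hKd : ∀ t ∈ Icc (0:ℝ) 1,
      HasDerivAt (fun s : ℝ => k ((s:ℂ)*z)) (deriv k ((t:ℂ)*z) * z) t := by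
    intro t ht
    have h1 : HasDerivAt k (deriv k ((t:ℂ)*z)) ((t:ℂ)*z) :=
      (hkd.differentiableAt (isOpen_ball.mem_nhds (hmem t ht))).hasDerivAt
    have h2 : HasDerivAt (fun ζ:ℂ => ζ * z) z ((t:ℂ)) := by
      simpa using (hasDerivAt_id ((t:ℂ))).mul_const z
    exact (h1.comp ((t:ℂ)) h2).comp_ofReal
  set D : ℝ → ℝ := fun t => (deriv k ((t:ℂ)*z) * z / k ((t:ℂ)*z)).re with hDdef
  set L : ℝ → ℝ := fun t => Real.log (Complex.normSq (k ((t:ℂ)*z))) with hLdef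
  have hL : ∀ t ∈ Icc (0:ℝ) 1, HasDerivAt L (2 * D t) t := by
    intro t ht
    set K := k ((t:ℂ)*z) with hKdef
    set K' := deriv k ((t:ℂ)*z) * z with hK'def
    have hKt : K ≠ 0 := hKne t ht
    have hnpos : 0 < Complex.normSq K := Complex.normSq_pos.2 hKt
    have hRe : HasDerivAt (fun s : ℝ => (k ((s:ℂ)*z)).re) K'.re t :=
      Complex.reCLM.hasFDerivAt.comp_hasDerivAt t (hKd t ht)
    have hIm : HasDerivAt (fun s : ℝ => (k ((s:ℂ)*z)).im) K'.im t :=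
      Complex.imCLM.hasFDerivAt.comp_hasDerivAt t (hKd t ht)
    have hN : HasDerivAt (fun s : ℝ => Complex.normSq (k ((s:ℂ)*z)))
        (K'.re * K.re + K.re * K'.re + (K'.im * K.im + K.im * K'.im)) t := by
      have := (hRe.mul hRe).add (hIm.mul hIm)
      simp only [Complex.normSq_apply]; exact this
    have hlog := (Real.hasDerivAt_log (ne_of_gt hnpos)).comp t hN
    have heq : (Complex.normSq K)⁻¹ * (K'.re * K.re + K.re * K'.re + (K'.im * K.im + K.im * K'.im))
        = 2 * D t := by
      rw [hDdef]
      simp only [← hKdef, ← hK'def, Complex.div_re]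
      field_simp
      ring
    rw [heq] at hlog
    exact hlog
  have hDbound : ∀ t ∈ Ioo (0:ℝ) 1,
      -(2*t*r^2/(1+t^2*r^2)) ≤ D t ∧ D t ≤ 2*t*r^2/(1-t^2*r^2) := by
    intro t ht
    have ht0 : 0 < t := ht.1
    have htI : t ∈ Icc (0:ℝ) 1 := ⟨le_of_lt ht.1, le_of_lt ht.2⟩
    have habs : ‖(t:ℂ)*z‖ = t*r := by
      rw [norm_mul, Complex.norm_real, Real.norm_eq_abs, _root_.abs_of_nonneg ht0.le, hrdef]
    have hbt := hb ((t:ℂ)*z) (hmem t htI)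
    rw [habs] at hbt
    have hmulre : (((t:ℂ)*z) * deriv k ((t:ℂ)*z) / k ((t:ℂ)*z)).re = t * D t := by
      rw [show ((t:ℂ)*z) * deriv k ((t:ℂ)*z) / k ((t:ℂ)*z)
          = (t:ℂ) * (deriv k ((t:ℂ)*z) * z / k ((t:ℂ)*z)) from by ring]
      rw [Complex.re_ofReal_mul, hDdef]
    rw [hmulre] at hbt
    have htr : t*r < 1 := by nlinarith [ht.2]
    have hd1 : (0:ℝ) < 1 - t^2*r^2 := by nlinarith [htr, mul_nonneg ht0.le hr0]
    have hd2 : (0:ℝ) < 1 + t^2*r^2 := by positivity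
    constructor
    · have h1 := hbt.1
      have e1 : -(2*(t*r)^2/(1+(t*r)^2)) = t * (-(2*t*r^2/(1+t^2*r^2))) := by
        rw [show (t*r)^2 = t^2*r^2 from by ring]
        field_simp [hd2.ne']
      rw [e1] at h1
      exact (mul_le_mul_iff_right₀ ht0).1 h1
    · have h2 := hbt.2
      have e2 : 2*(t*r)^2/(1-(t*r)^2) = t * (2*t*r^2/(1-t^2*r^2)) := by
        rw [show (t*r)^2 = t^2*r^2 from by ring]
        field_simp [hd1.ne']
      rw [e2] at h2
      exact (mul_le_mul_iff_right₀ ht0).1 h2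
  have hr2 : (0:ℝ) < 1 - r^2 := by nlinarith
  have hr2' : (0:ℝ) < 1 + r^2 := by positivity
  have hlogderiv : ∀ (c : ℝ) (t : ℝ), t ∈ Icc (0:ℝ) 1 → 0 < 1 + c*t^2*r^2 →
      HasDerivAt (fun s : ℝ => Real.log (1 + c*s^2*r^2)) ((1+c*t^2*r^2)⁻¹ * (2*c*t*r^2)) t := by
    intro c t ht hpos
    have hinner : HasDerivAt (fun s : ℝ => 1 + c*s^2*r^2) (2*c*t*r^2) t := by
      have h1 : HasDerivAt (fun s : ℝ => s^2) (2*t) t := by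
        simpa using hasDerivAt_pow 2 t
      have := ((h1.const_mul c).mul_const (r^2)).const_add 1
      exact this.congr_deriv (by ring)
    exact (Real.hasDerivAt_log (ne_of_gt hpos)).comp t hinner
  -- upper bound
  have hupper : Real.log (Complex.normSq (k z)) ≤ -(2 * Real.log (1 - r^2)) := by
    set U : ℝ → ℝ := fun t => L t + 2 * Real.log (1 + (-1)*t^2*r^2) with hUdef
    have hUd : ∀ t ∈ Icc (0:ℝ) 1, HasDerivAt U
        (2 * D t + 2 * ((1+(-1)*t^2*r^2)⁻¹ * (2*(-1)*t*r^2))) t := by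
      intro t ht
      have htr : t*r < 1 := by nlinarith [ht.1, ht.2]
      have hpos : (0:ℝ) < 1 + (-1)*t^2*r^2 := by
        nlinarith [htr, mul_nonneg ht.1 hr0]
      exact (hL t ht).add ((hlogderiv (-1) t ht hpos).const_mul 2)
    have hanti : AntitoneOn U (Icc (0:ℝ) 1) := by
      apply antitoneOn_of_deriv_nonpos (convex_Icc 0 1)
      · intro t ht
        exact (hUd t ht).continuousAt.continuousWithinAt
      · rw [interior_Icc]
        intro t ht
        exact ((hUd t (Ioo_subset_Icc_self ht)).differentiableAt).differentiableWithinAt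
      · rw [interior_Icc]
        intro t ht
        rw [(hUd t (Ioo_subset_Icc_self ht)).deriv]
        have hDb := (hDbound t ht).2
        have htr : t*r < 1 := by nlinarith [ht.1, ht.2]
        have hpos : (0:ℝ) < 1 - t^2*r^2 := by
          nlinarith [htr, mul_nonneg ht.1.le hr0]
        have e : (2:ℝ) * ((1+(-1)*t^2*r^2)⁻¹ * (2*(-1)*t*r^2)) = -(2*(2*t*r^2/(1-t^2*r^2))) := by
          rw [show (1:ℝ)+(-1)*t^2*r^2 = 1-t^2*r^2 from by ring]
          field_simp
        rw [e]
        linarith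
    have h01 := hanti (left_mem_Icc.2 zero_le_one) (right_mem_Icc.2 zero_le_one) zero_le_one
    have hU0 : U 0 = 0 := by
      simp [hUdef, hLdef, hk0]
    have hU1 : U 1 = Real.log (Complex.normSq (k z)) + 2 * Real.log (1 - r^2) := by
      rw [hUdef]
      simp only [hLdef]
      norm_num
      ring_nf
    rw [hU0, hU1] at h01
    linarith
  -- lower bound
  have hlower : -(2 * Real.log (1 + r^2)) ≤ Real.log (Complex.normSq (k z)) := by
    set V : ℝ → ℝ := fun t => L t + 2 * Real.log (1 + 1*t^2*r^2) with hVdef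
    have hVd : ∀ t ∈ Icc (0:ℝ) 1, HasDerivAt V
        (2 * D t + 2 * ((1+1*t^2*r^2)⁻¹ * (2*1*t*r^2))) t := by
      intro t ht
      have hpos : (0:ℝ) < 1 + 1*t^2*r^2 := by nlinarith [ht.1, ht.2]
      exact (hL t ht).add ((hlogderiv 1 t ht hpos).const_mul 2)
    have hmono : MonotoneOn V (Icc (0:ℝ) 1) := by
      apply monotoneOn_of_deriv_nonneg (convex_Icc 0 1)
      · intro t ht
        exact (hVd t ht).continuousAt.continuousWithinAt
      · rw [interior_Icc]
        intro t ht
        exact ((hVd t (Ioo_subset_Icc_self ht)).differentiableAt).differentiableWithinAt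
      · rw [interior_Icc]
        intro t ht
        rw [(hVd t (Ioo_subset_Icc_self ht)).deriv]
        have hDb := (hDbound t ht).1
        have hpos : (0:ℝ) < 1 + t^2*r^2 := by positivity
        have e : (2:ℝ) * ((1+1*t^2*r^2)⁻¹ * (2*1*t*r^2)) = 2*(2*t*r^2/(1+t^2*r^2)) := by
          rw [show (1:ℝ)+1*t^2*r^2 = 1+t^2*r^2 from by ring]
          field_simp
        rw [e]
        linarith
    have h01 := hmono (left_mem_Icc.2 zero_le_one) (right_mem_Icc.2 zero_le_one) zero_le_one
    have hV0 : V 0 = 0 := by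
      simp [hVdef, hLdef, hk0]
    have hV1 : V 1 = Real.log (Complex.normSq (k z)) + 2 * Real.log (1 + r^2) := by
      rw [hVdef]
      simp only [hLdef]
      norm_num
    rw [hV0, hV1] at h01
    linarith
  -- convert to abs
  have hnpos : 0 < Complex.normSq (k z) := Complex.normSq_pos.2 (hkne z hz)
  have habs : ‖k z‖ = Real.sqrt (Complex.normSq (k z)) := by rw [Complex.norm_def]
  constructor
  · have hlog2 : Real.log ((1/(1+r^2))^2) = -(2 * Real.log (1+r^2)) := by
      rw [one_div, ← Real.rpow_natCast, Real.log_rpow (by positivity), Real.log_inv]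
      push_cast; ring
    have h2 : (1/(1+r^2))^2 ≤ Complex.normSq (k z) := by
      have := Real.exp_le_exp.2 (hlog2 ▸ hlower)
      rwa [Real.exp_log (by positivity), Real.exp_log hnpos] at this
    rw [habs]
    calc 1/(1+r^2) = Real.sqrt ((1/(1+r^2))^2) := by
          rw [Real.sqrt_sq (by positivity)]
    _ ≤ Real.sqrt (Complex.normSq (k z)) := Real.sqrt_le_sqrt h2
  · have hlog2 : Real.log ((1/(1-r^2))^2) = -(2 * Real.log (1-r^2)) := by
      rw [one_div, ← Real.rpow_natCast, Real.log_rpow (by positivity), Real.log_inv]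
      push_cast; ring
    have h2 : Complex.normSq (k z) ≤ (1/(1-r^2))^2 := by
      have := Real.exp_le_exp.2 (hlog2 ▸ hupper)
      rwa [Real.exp_log hnpos, Real.exp_log (by positivity)] at this
    rw [habs]
    calc Real.sqrt (Complex.normSq (k z)) ≤ Real.sqrt ((1/(1-r^2))^2) := Real.sqrt_le_sqrt h2
    _ = 1/(1-r^2) := Real.sqrt_sq (by positivity)

open Set in
theorem distortion_Ks_gamma (γ : ℝ) (hγ0 : 0 ≤ γ) (hγ1 : γ < 1)
    (f g w : ℂ → ℂ)
    (hf : AnalyticOnNhd ℂ f (ball (0:ℂ) 1)) (hf0 : f 0 = 0) (hf1 : deriv f 0 = 1)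
    (hg : AnalyticOnNhd ℂ g (ball (0:ℂ) 1)) (hg0 : g 0 = 0) (hg1 : deriv g 0 = 1)
    (hstar : ∀ z ∈ ball (0:ℂ) 1, z ≠ 0 → 1 / 2 < (z * deriv g z / g z).re)
    (hw : AnalyticOnNhd ℂ w (ball (0:ℂ) 1)) (hw0 : w 0 = 0)
    (hwb : ∀ z ∈ ball (0:ℂ) 1, ‖w z‖ < 1)
    (hsub : ∀ z ∈ ball (0:ℂ) 1, z ≠ 0 →
      -(z ^ 2 * deriv f z) / (g z * g (-z))
        = (1 + (1 - 2 * (γ : ℂ)) * w z) / (1 - w z))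
    (r : ℝ) (hr : r < 1) (z : ℂ) (hz : ‖z‖ = r) :
    (1 - (1 - 2 * γ) * r) / ((1 + r) * (1 + r ^ 2)) ≤ ‖deriv f z‖ ∧
    ‖deriv f z‖ ≤ (1 + (1 - 2 * γ) * r) / ((1 - r) * (1 - r ^ 2)) := by
  have hr0 : 0 ≤ r := hz ▸ norm_nonneg z
  rcases eq_or_ne z 0 with rfl | hzne
  · have hr00 : r = 0 := by simpa using hz.symm
    subst hr00
    rw [hf1]
    norm_num
  -- z ≠ 0
  have hzball : z ∈ ball (0:ℂ) 1 := by
    rw [mem_ball_zero_iff, hz]; exact hr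
  have hrpos : 0 < r := hz ▸ norm_pos_iff.mpr hzne
  -- setup G1 and k
  set G1 : ℂ → ℂ := dslope g 0 with hG1def
  have hG1d : DifferentiableOn ℂ G1 (ball (0:ℂ) 1) :=
    (differentiableOn_dslope (ball_mem_nhds _ one_pos)).2 hg.differentiableOn
  have hgeq : ∀ x : ℂ, g x = x * G1 x := by
    intro x
    rcases eq_or_ne x 0 with rfl | hx
    · simp [hg0]
    · rw [hG1def, dslope_of_ne _ hx, slope_def_field, hg0]
      field_simp
      ring
  have hG10 : G1 0 = 1 := by rw [hG1def, dslope_same, hg1]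
  have hgne : ∀ ζ ∈ ball (0:ℂ) 1, ζ ≠ 0 → g ζ ≠ 0 := by
    intro ζ hζ hζ0 hgz
    have := hstar ζ hζ hζ0
    rw [hgz] at this
    simp at this
    linarith
  have hG1ne : ∀ ζ ∈ ball (0:ℂ) 1, G1 ζ ≠ 0 := by
    intro ζ hζ
    rcases eq_or_ne ζ 0 with rfl | hζ0
    · rw [hG10]; exact one_ne_zero
    · intro h
      apply hgne ζ hζ hζ0
      rw [hgeq ζ, h, mul_zero]
  have hnegball : ∀ ζ : ℂ, ζ ∈ ball (0:ℂ) 1 → -ζ ∈ ball (0:ℂ) 1 := by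
    intro ζ hζ
    rwa [mem_ball_zero_iff, norm_neg, ← mem_ball_zero_iff]
  have hgderiv : ∀ ζ ∈ ball (0:ℂ) 1, deriv g ζ = G1 ζ + ζ * deriv G1 ζ := by
    intro ζ hζ
    have hG1at : DifferentiableAt ℂ G1 ζ := hG1d.differentiableAt (isOpen_ball.mem_nhds hζ)
    have h1 : HasDerivAt (fun x : ℂ => x * G1 x) (1 * G1 ζ + ζ * deriv G1 ζ) ζ :=
      (hasDerivAt_id ζ).mul hG1at.hasDerivAt
    have h2 : g = fun x : ℂ => x * G1 x := funext hgeq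
    rw [h2]
    rw [h1.deriv]
    ring
  set k : ℂ → ℂ := fun ζ => G1 ζ * G1 (-ζ) with hkdef
  have hkd : DifferentiableOn ℂ k (ball (0:ℂ) 1) := by
    apply hG1d.mul
    exact hG1d.comp (differentiable_neg.differentiableOn)
      (fun x hx => hnegball x hx)
  have hka : AnalyticOnNhd ℂ k (ball (0:ℂ) 1) := hkd.analyticOnNhd isOpen_ball
  have hk0 : k 0 = 1 := by simp [hkdef, hG10]
  have hkne : ∀ ζ ∈ ball (0:ℂ) 1, k ζ ≠ 0 := by
    intro ζ hζ
    exact mul_ne_zero (hG1ne ζ hζ) (hG1ne (-ζ) (hnegball ζ hζ))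
  have hkeven : ∀ ζ : ℂ, k (-ζ) = k ζ := by
    intro ζ; rw [hkdef]; simp only [neg_neg]; ring
  have hkderiv : ∀ ζ ∈ ball (0:ℂ) 1,
      deriv k ζ = deriv G1 ζ * G1 (-ζ) - G1 ζ * deriv G1 (-ζ) := by
    intro ζ hζ
    have hG1at : DifferentiableAt ℂ G1 ζ := hG1d.differentiableAt (isOpen_ball.mem_nhds hζ)
    have hG1at' : DifferentiableAt ℂ G1 (-ζ) :=
      hG1d.differentiableAt (isOpen_ball.mem_nhds (hnegball ζ hζ))
    have h2 : HasDerivAt (fun x : ℂ => G1 (-x)) (-deriv G1 (-ζ)) ζ := by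
      have := hG1at'.hasDerivAt.comp ζ (hasDerivAt_neg ζ)
      simpa [Function.comp_def] using this
    have h3 : HasDerivAt (fun x : ℂ => G1 x * G1 (-x)) _ ζ := hG1at.hasDerivAt.mul h2
    rw [hkdef]
    rw [h3.deriv]
    ring
  have hgid : g z * g (-z) = -(z^2 * k z) := by
    rw [hgeq z, hgeq (-z), hkdef]
    ring
  -- positivity of Re p
  have hre : ∀ ζ ∈ ball (0:ℂ) 1, 0 < ((ζ * deriv k ζ + k ζ) / k ζ).re := by
    intro ζ hζ
    rcases eq_or_ne ζ 0 with rfl | hζ0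
    · rw [hk0]
      norm_num
    · have hA : G1 ζ ≠ 0 := hG1ne ζ hζ
      have hB : G1 (-ζ) ≠ 0 := hG1ne (-ζ) (hnegball ζ hζ)
      have hgz : g ζ ≠ 0 := hgne ζ hζ hζ0
      have hgz' : g (-ζ) ≠ 0 := hgne (-ζ) (hnegball ζ hζ) (neg_ne_zero.2 hζ0)
      have hid : (ζ * deriv k ζ + k ζ) / k ζ
          = ζ * deriv g ζ / g ζ + (-ζ) * deriv g (-ζ) / g (-ζ) - 1 := by
        rw [hkderiv ζ hζ, hgderiv ζ hζ, hgderiv (-ζ) (hnegball ζ hζ), hgeq ζ, hgeq (-ζ), hkdef]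
        field_simp
        ring
      rw [hid]
      have h1 := hstar ζ hζ hζ0
      have h2 := hstar (-ζ) (hnegball ζ hζ) (neg_ne_zero.2 hζ0)
      simp only [Complex.sub_re, Complex.add_re, Complex.one_re]
      linarith
  -- growth bounds for k
  have hb := carath_bound k hka hk0 hkne hkeven hre
  have hgrowth := growth_from_bound k hkd hk0 hkne hb z hzball
  rw [hz] at hgrowth
  -- bound on |w z|
  have hwle : ‖w z‖ ≤ r := by
    have hmaps : MapsTo w (ball (0:ℂ) 1) (ball (0:ℂ) 1) := by
      intro x hx; rw [mem_ball_zero_iff]; exact hwb x hx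
    have := Complex.norm_le_norm_of_mapsTo_ball hw.differentiableOn (hmaps.mono_right ball_subset_closedBall) hw0
      (show ‖z‖ < 1 by rw [hz]; exact hr)
    rwa [hz] at this
  -- Mobius bound for the subordination factor
  have hmob := mobius_bounds (1 - 2*γ) r (w z) (by linarith) (by linarith) hr0 hr hwle
  have hcast : ((1 - 2*γ : ℝ) : ℂ) = 1 - 2*(γ:ℂ) := by push_cast; ring
  rw [hcast] at hmob
  -- derivative formula
  have hfd : deriv f z = k z * ((1 + (1 - 2*(γ:ℂ)) * w z) / (1 - w z)) := by
    have hs := hsub z hzball hzne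
    rw [hgid] at hs
    have hz2 : (z:ℂ)^2 ≠ 0 := pow_ne_zero 2 hzne
    have hkz : k z ≠ 0 := hkne z hzball
    have : -(z^2 * deriv f z) / (-(z^2 * k z)) = deriv f z / k z := by
      rw [neg_div_neg_eq]
      rw [mul_div_mul_left _ _ hz2]
    rw [this] at hs
    field_simp at hs
    rw [hs]
    ring
  have habsf : ‖deriv f z‖
      = ‖k z‖ * ‖(1 + (1 - 2*(γ:ℂ)) * w z) / (1 - w z)‖ := by
    rw [hfd, norm_mul]
  have hr2 : (0:ℝ) < 1 - r^2 := by nlinarith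
  have hr2' : (0:ℝ) < 1 + r^2 := by positivity
  have hc1 : 0 < 1 - (1-2*γ)*r := by nlinarith
  have hc2 : 0 < 1 + (1-2*γ)*r := by nlinarith
  constructor
  · rw [habsf]
    have h1 : (1/(1+r^2)) * ((1 - (1-2*γ)*r)/(1+r))
        ≤ ‖k z‖ * ‖(1 + (1 - 2*(γ:ℂ)) * w z) / (1 - w z)‖ := by
      apply mul_le_mul hgrowth.1 hmob.1 (by positivity) (norm_nonneg _)
    have he : (1/(1+r^2)) * ((1 - (1-2*γ)*r)/(1+r)) = (1 - (1-2*γ)*r)/((1+r)*(1+r^2)) := by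
      rw [div_mul_div_comm, one_mul, mul_comm ((1:ℝ)+r^2) (1+r)]
    rw [he] at h1
    exact h1
  · rw [habsf]
    have h1 : ‖k z‖ * ‖(1 + (1 - 2*(γ:ℂ)) * w z) / (1 - w z)‖
        ≤ (1/(1-r^2)) * ((1 + (1-2*γ)*r)/(1-r)) := by
      apply mul_le_mul hgrowth.2 hmob.2 (norm_nonneg _) (by positivity)
    have he : (1/(1-r^2)) * ((1 + (1-2*γ)*r)/(1-r)) = (1 + (1-2*γ)*r)/((1-r)*(1-r^2)) := by
      rw [div_mul_div_comm, one_mul, mul_comm ((1:ℝ)-r^2) (1-r)]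
    rw [he] at h1
    exact h1
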